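/- Let U₀, U₁ be real random variables (not necessarily independent) such that for given positive constants σ₀, σ₁, κ₀, κ₁ and every t with 0 ≤ t < 1/κᵢ one has log E[exp(t·Uᵢ)] ≤ (σᵢ t)²/(1 − κᵢ t) for i = 0,1. Then with σ = σ₀ + σ₁ and κ = κ₀ + κ₁, for every t with 0 ≤ t < 1/κ, log E[exp(t(U₀ + U₁))] ≤ (σt)²/(1 − κt). -/

import Mathlib

open MeasureTheory

lemma aux_memLp {Ω : Type*} [MeasurableSpace Ω] {μ : Measure Ω} {g : Ω → ℝ} (hg : Measurable g)
    {t p : ℝ} (hp : 0 < p) (h : Integrable (fun ω => Real.exp (p * t * g ω)) μ) :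
    MemLp (fun ω => Real.exp (t * g ω)) (ENNReal.ofReal p) μ := by
  have hmeas : AEStronglyMeasurable (fun ω => Real.exp (t * g ω)) μ :=
    (Real.measurable_exp.comp (hg.const_mul t)).aestronglyMeasurable
  have hq0 : (ENNReal.ofReal p) ≠ 0 := by simp [ENNReal.ofReal_eq_zero, not_le, hp]
  have hqt : ENNReal.ofReal p ≠ ⊤ := ENNReal.ofReal_ne_top
  rw [← memLp_norm_rpow_iff hmeas hq0 hqt, ENNReal.toReal_ofReal hp.le,
    ENNReal.div_self hq0 hqt, memLp_one_iff_integrable]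
  refine h.congr (Filter.Eventually.of_forall fun ω => ?_)
  show Real.exp (p * t * g ω) = ‖Real.exp (t * g ω)‖ ^ p
  rw [Real.norm_eq_abs, abs_of_pos (Real.exp_pos _), ← Real.exp_mul]
  congr 1; ring

theorem stmt_14 {Ω : Type*} [MeasurableSpace Ω] {μ : Measure Ω} [IsProbabilityMeasure μ]
    (U₀ U₁ : Ω → ℝ) (σ₀ σ₁ κ₀ κ₁ : ℝ)
    (hσ₀ : 0 < σ₀) (hσ₁ : 0 < σ₁) (hκ₀ : 0 < κ₀) (hκ₁ : 0 < κ₁)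
    (hmeas₀ : Measurable U₀) (hmeas₁ : Measurable U₁)
    (hint₀ : ∀ t : ℝ, 0 ≤ t → t < 1 / κ₀ → Integrable (fun ω => Real.exp (t * U₀ ω)) μ)
    (hint₁ : ∀ t : ℝ, 0 ≤ t → t < 1 / κ₁ → Integrable (fun ω => Real.exp (t * U₁ ω)) μ)
    (hmgf₀ : ∀ t : ℝ, 0 ≤ t → t < 1 / κ₀ →
      Real.log (∫ ω, Real.exp (t * U₀ ω) ∂μ) ≤ (σ₀ * t) ^ 2 / (1 - κ₀ * t))
    (hmgf₁ : ∀ t : ℝ, 0 ≤ t → t < 1 / κ₁ →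
      Real.log (∫ ω, Real.exp (t * U₁ ω) ∂μ) ≤ (σ₁ * t) ^ 2 / (1 - κ₁ * t)) :
    ∀ t : ℝ, 0 ≤ t → t < 1 / (κ₀ + κ₁) →
      Real.log (∫ ω, Real.exp (t * (U₀ ω + U₁ ω)) ∂μ) ≤
        ((σ₀ + σ₁) * t) ^ 2 / (1 - (κ₀ + κ₁) * t) := by
  intro t ht0 htκ
  rcases eq_or_lt_of_le ht0 with h0 | ht0
  · simp [← h0]
  -- basic positivity facts
  have hσ : (0:ℝ) < σ₀ + σ₁ := by linarith
  have hκ : (0:ℝ) < κ₀ + κ₁ := by linarith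
  have hD : 0 < 1 - (κ₀ + κ₁) * t := by
    have := (lt_div_iff₀ hκ).mp htκ
    linarith [mul_comm t (κ₀ + κ₁)]
  set D := 1 - (κ₀ + κ₁) * t with hDdef
  set a₀ := σ₀ * D / (σ₀ + σ₁) with ha₀def
  set a₁ := σ₁ * D / (σ₀ + σ₁) with ha₁def
  have ha₀ : 0 < a₀ := by positivity
  have ha₁ : 0 < a₁ := by positivity
  set α₀ := κ₀ * t + a₀ with hα₀def
  set α₁ := κ₁ * t + a₁ with hα₁def
  have hα₀ : 0 < α₀ := by positivity
  have hα₁ : 0 < α₁ := by positivity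
  have hαsum : α₀ + α₁ = 1 := by
    rw [hα₀def, hα₁def, ha₀def, ha₁def]
    field_simp
    ring
  set p := 1 / α₀ with hpdef
  set q := 1 / α₁ with hqdef
  have hpq : p.HolderConjugate q := by
    rw [Real.holderConjugate_iff]
    constructor
    · rw [hpdef, lt_div_iff₀ hα₀, one_mul]
      linarith
    · rw [hpdef, hqdef]
      field_simp
      linarith
  -- ranges of the boosted parameters
  have hpt0 : 0 ≤ p * t := by positivity
  have hqt0 : 0 ≤ q * t := by positivity
  have hptlt : p * t < 1 / κ₀ := by
    rw [hpdef, div_mul_eq_mul_div, one_mul, div_lt_div_iff₀ hα₀ hκ₀, one_mul]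
    calc t * κ₀ = κ₀ * t := mul_comm _ _
    _ < α₀ := by rw [hα₀def]; linarith
  have hqtlt : q * t < 1 / κ₁ := by
    rw [hqdef, div_mul_eq_mul_div, one_mul, div_lt_div_iff₀ hα₁ hκ₁, one_mul]
    calc t * κ₁ = κ₁ * t := mul_comm _ _
    _ < α₁ := by rw [hα₁def]; linarith
  have hintp := hint₀ (p * t) hpt0 hptlt
  have hintq := hint₁ (q * t) hqt0 hqtlt
  -- integrability of the product via Young's inequality
  have hprod : Integrable (fun ω => Real.exp (t * U₀ ω) * Real.exp (t * U₁ ω)) μ := by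
    refine Integrable.mono' ((hintp.div_const p).add (hintq.div_const q))
      ((Real.measurable_exp.comp (hmeas₀.const_mul t)).aestronglyMeasurable.mul
        (Real.measurable_exp.comp (hmeas₁.const_mul t)).aestronglyMeasurable)
      (Filter.Eventually.of_forall fun ω => ?_)
    have hy := Real.young_inequality_of_nonneg (Real.exp_pos (t * U₀ ω)).le
      (Real.exp_pos (t * U₁ ω)).le hpq
    rw [Real.norm_eq_abs, abs_of_pos (by positivity)]
    calc Real.exp (t * U₀ ω) * Real.exp (t * U₁ ω)
        ≤ Real.exp (t * U₀ ω) ^ p / p + Real.exp (t * U₁ ω) ^ q / q := hy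
      _ = Real.exp (p * t * U₀ ω) / p + Real.exp (q * t * U₁ ω) / q := by
          rw [← Real.exp_mul, ← Real.exp_mul]; ring_nf
  have hexpadd : (fun ω => Real.exp (t * (U₀ ω + U₁ ω)))
      = fun ω => Real.exp (t * U₀ ω) * Real.exp (t * U₁ ω) := by
    funext ω; rw [← Real.exp_add]; ring_nf
  -- positivity of integrals
  have hI : 0 < ∫ ω, Real.exp (t * (U₀ ω + U₁ ω)) ∂μ := by
    have h := ProbabilityTheory.mgf_pos (X := fun ω => U₀ ω + U₁ ω) (t := t) (μ := μ)
      (by rw [hexpadd]; exact hprod)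
    exact h
  have hA : 0 < ∫ ω, Real.exp (p * t * U₀ ω) ∂μ :=
    ProbabilityTheory.mgf_pos (X := U₀) (t := p * t) (μ := μ) hintp
  have hB : 0 < ∫ ω, Real.exp (q * t * U₁ ω) ∂μ :=
    ProbabilityTheory.mgf_pos (X := U₁) (t := q * t) (μ := μ) hintq
  -- Hölder
  have hholder : ∫ ω, Real.exp (t * (U₀ ω + U₁ ω)) ∂μ ≤
      (∫ ω, Real.exp (p * t * U₀ ω) ∂μ) ^ (1 / p) * (∫ ω, Real.exp (q * t * U₁ ω) ∂μ) ^ (1 / q) := by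
    rw [hexpadd]
    have h1 : ∫ ω, Real.exp (p * t * U₀ ω) ∂μ = ∫ ω, Real.exp (t * U₀ ω) ^ p ∂μ := by
      refine integral_congr_ae (Filter.Eventually.of_forall fun ω => ?_)
      show Real.exp (p * t * U₀ ω) = Real.exp (t * U₀ ω) ^ p
      rw [← Real.exp_mul]; congr 1; ring
    have h2 : ∫ ω, Real.exp (q * t * U₁ ω) ∂μ = ∫ ω, Real.exp (t * U₁ ω) ^ q ∂μ := by
      refine integral_congr_ae (Filter.Eventually.of_forall fun ω => ?_)
      show Real.exp (q * t * U₁ ω) = Real.exp (t * U₁ ω) ^ q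
      rw [← Real.exp_mul]; congr 1; ring
    rw [h1, h2]
    exact integral_mul_le_Lp_mul_Lq_of_nonneg hpq
      (Filter.Eventually.of_forall fun ω => (Real.exp_pos _).le)
      (Filter.Eventually.of_forall fun ω => (Real.exp_pos _).le)
      (aux_memLp hmeas₀ hpq.pos hintp) (aux_memLp hmeas₁ hpq.symm.pos hintq)
  -- take logs
  have hlog : Real.log (∫ ω, Real.exp (t * (U₀ ω + U₁ ω)) ∂μ) ≤
      (1 / p) * Real.log (∫ ω, Real.exp (p * t * U₀ ω) ∂μ)
      + (1 / q) * Real.log (∫ ω, Real.exp (q * t * U₁ ω) ∂μ) := by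
    calc Real.log (∫ ω, Real.exp (t * (U₀ ω + U₁ ω)) ∂μ)
        ≤ Real.log ((∫ ω, Real.exp (p * t * U₀ ω) ∂μ) ^ (1 / p)
            * (∫ ω, Real.exp (q * t * U₁ ω) ∂μ) ^ (1 / q)) :=
          Real.log_le_log hI hholder
      _ = _ := by
          rw [Real.log_mul (by positivity) (by positivity), Real.log_rpow hA, Real.log_rpow hB]
  -- bound each term by the sub-gamma bound and finish with arithmetic
  have hb₀ := hmgf₀ (p * t) hpt0 hptlt
  have hb₁ := hmgf₁ (q * t) hqt0 hqtlt
  have hp0 : (0:ℝ) < 1 / p := by positivity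
  have hq0' : (0:ℝ) < 1 / q := by positivity
  have hkey : (1 / p) * ((σ₀ * (p * t)) ^ 2 / (1 - κ₀ * (p * t)))
      + (1 / q) * ((σ₁ * (q * t)) ^ 2 / (1 - κ₁ * (q * t)))
      = ((σ₀ + σ₁) * t) ^ 2 / (1 - (κ₀ + κ₁) * t) := by
    have e₀ : 1 - κ₀ * (p * t) = a₀ / α₀ := by
      rw [hpdef]
      field_simp
      rw [hα₀def]; ring
    have e₁ : 1 - κ₁ * (q * t) = a₁ / α₁ := by
      rw [hqdef]
      field_simp
      rw [hα₁def]; ring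
    rw [e₀, e₁, hpdef, hqdef, ha₀def, ha₁def]
    rw [← hDdef]
    field_simp
  calc Real.log (∫ ω, Real.exp (t * (U₀ ω + U₁ ω)) ∂μ)
      ≤ (1 / p) * Real.log (∫ ω, Real.exp (p * t * U₀ ω) ∂μ)
        + (1 / q) * Real.log (∫ ω, Real.exp (q * t * U₁ ω) ∂μ) := hlog
    _ ≤ (1 / p) * ((σ₀ * (p * t)) ^ 2 / (1 - κ₀ * (p * t)))
        + (1 / q) * ((σ₁ * (q * t)) ^ 2 / (1 - κ₁ * (q * t))) := by
        gcongr
    _ = _ := hkey
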